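/- Let (x̃_n)_{n∈ℕ} be a strictly increasing sequence with x̃_0 = 0 whose successive differences are bounded above (so that x̃_n grows at most linearly). On ℓ²(ℕ,ℂ) with orthonormal basis (e_n), let ã e_n = √(x̃_n) e_{n−1}, ã† e_n = √(x̃_{n+1}) e_{n+1}, Q̃ = (ã + ã†)/√2, P̃ = (ã − ã†)/(i√2), and for z ∈ ℂ let ṽ_z = Ñ(|z|²)^{−1/2} Σ_n (z^n/√(x̃_n!)) e_n, where x̃_n! = x̃_1⋯x̃_n and Ñ(t) = Σ_n t^n/x̃_n!. Then the variances of Q̃ and P̃ in the state ṽ_z are equal, and the product of dispersions satisfies Δ_{ṽ_z}Q̃ · Δ_{ṽ_z}P̃ = (1/2) Σ_{n=0}^∞ (x̃_{n+1} − x̃_n) |z|^{2n} / (Ñ(|z|²) x̃_n!) = (1/2) ⟨ṽ_z, (x̃_{N+1} − x̃_N) ṽ_z⟩, where ΔA := √(⟨ṽ_z, A² ṽ_z⟩ − ⟨ṽ_z, A ṽ_z⟩²) and x̃_N is the diagonal operator x̃_N e_n = x̃_n e_n. -/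

import Mathlib

noncomputable section

/-- The factorial `x̃ₙ! = x̃ 1 * ⋯ * x̃ n` (with `x̃₀! = 1`). -/
def tfact (xt : ℕ → ℝ) (n : ℕ) : ℝ := ∏ k ∈ Finset.range n, xt (k + 1)

/-- The exponential `Ñ(t) = Σ tⁿ/x̃ₙ!`. -/
def texp (xt : ℕ → ℝ) (t : ℝ) : ℝ := ∑' n : ℕ, t ^ n / tfact xt n

/-- Coefficients of the deformed coherent state
`ṽ_z = Ñ(|z|²)^{-1/2} Σ zⁿ/√(x̃ₙ!) eₙ` in the orthonormal basis `(eₙ)`. -/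
def tcoh (xt : ℕ → ℝ) (z : ℂ) (n : ℕ) : ℂ :=
  (Real.sqrt (texp xt (‖z‖ ^ 2)))⁻¹ * z ^ n / Real.sqrt (tfact xt n)

/-- The lowering operator `ã` acting on coefficient sequences:
`ã eₙ = √(x̃ₙ) e_{n−1}`, i.e. `(ã f)(n) = √(x̃_{n+1}) f(n+1)`. -/
def aOp (xt : ℕ → ℝ) (f : ℕ → ℂ) (n : ℕ) : ℂ := (Real.sqrt (xt (n + 1)) : ℂ) * f (n + 1)

/-- The raising operator `ã†` acting on coefficient sequences:
`ã† eₙ = √(x̃_{n+1}) e_{n+1}`, i.e. `(ã† f)(n) = √(x̃ₙ) f(n−1)` with `(ã† f)(0) = 0`. -/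
def adOp (xt : ℕ → ℝ) (f : ℕ → ℂ) (n : ℕ) : ℂ :=
  if n = 0 then 0 else (Real.sqrt (xt n) : ℂ) * f (n - 1)

/-- The position operator `Q̃ = (ã + ã†)/√2`. -/
def QOp (xt : ℕ → ℝ) (f : ℕ → ℂ) (n : ℕ) : ℂ :=
  (aOp xt f n + adOp xt f n) / (Real.sqrt 2 : ℂ)

/-- The momentum operator `P̃ = (ã − ã†)/(i√2)`. -/
def POp (xt : ℕ → ℝ) (f : ℕ → ℂ) (n : ℕ) : ℂ :=
  (aOp xt f n - adOp xt f n) / (Complex.I * (Real.sqrt 2 : ℂ))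

/-- The expectation value `⟨ṽ_z, T ṽ_z⟩ = Σ conj((ṽ_z)ₙ) (T ṽ_z)ₙ` of an
operator `T` (given by its action on coefficient sequences) in the state `ṽ_z`. -/
def expVal (xt : ℕ → ℝ) (z : ℂ) (T : (ℕ → ℂ) → ℕ → ℂ) : ℂ :=
  ∑' n : ℕ, (starRingEnd ℂ) (tcoh xt z n) * T (tcoh xt z) n

/-- The variance `⟨ṽ_z, T² ṽ_z⟩ − ⟨ṽ_z, T ṽ_z⟩²`. -/
def variance (xt : ℕ → ℝ) (z : ℂ) (T : (ℕ → ℂ) → ℕ → ℂ) : ℂ :=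
  expVal xt z (fun f => T (T f)) - (expVal xt z T) ^ 2

/-- The dispersion `Δ_{ṽ_z} T = √(⟨T²⟩ − ⟨T⟩²)` (the variance being real). -/
def disp (xt : ℕ → ℝ) (z : ℂ) (T : (ℕ → ℂ) → ℕ → ℂ) : ℝ :=
  Real.sqrt (variance xt z T).re

end

private lemma tfact_pos {xt : ℕ → ℝ} (hx0 : xt 0 = 0) (hmono : StrictMono xt) (n : ℕ) :
    0 < tfact xt n :=
  Finset.prod_pos fun k _ => hx0 ▸ hmono k.succ_pos

private lemma tfact_succ (xt : ℕ → ℝ) (n : ℕ) :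
    tfact xt (n + 1) = tfact xt n * xt (n + 1) :=
  Finset.prod_range_succ _ _

private lemma mul_div_aux (A B C : ℂ) (hA : A ≠ 0) : A * (B / (C * A)) = B / C := by
  rw [← div_div, mul_comm]
  exact div_mul_cancel₀ _ hA

private lemma a_eigen (xt : ℕ → ℝ) (hx0 : xt 0 = 0) (hmono : StrictMono xt) (z : ℂ) (n : ℕ) :
    aOp xt (tcoh xt z) n = z * tcoh xt z n := by
  have hxp : 0 < xt (n + 1) := hx0 ▸ hmono n.succ_pos
  have hfp : 0 < tfact xt n := tfact_pos hx0 hmono n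
  have hsf : Real.sqrt (tfact xt (n + 1)) = Real.sqrt (tfact xt n) * Real.sqrt (xt (n + 1)) := by
    rw [tfact_succ, Real.sqrt_mul hfp.le]
  have h1 : ((Real.sqrt (xt (n + 1)) : ℝ) : ℂ) ≠ 0 :=
    Complex.ofReal_ne_zero.mpr (ne_of_gt (Real.sqrt_pos.mpr hxp))
  simp only [aOp, tcoh, hsf]
  push_cast
  rw [mul_div_aux _ _ _ h1, pow_succ]
  ring

/-- for a strictly increasing sequence `x̃` with `x̃₀ = 0` and
bounded gaps, in the deformed coherent state `ṽ_z` the variances of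
`Q̃ = (ã + ã†)/√2` and `P̃ = (ã − ã†)/(i√2)` are equal, and the product of
dispersions satisfies
`Δ_{ṽ_z}Q̃ · Δ_{ṽ_z}P̃ = (1/2) Σₙ (x̃_{n+1} − x̃ₙ) |z|^{2n}/(Ñ(|z|²) x̃ₙ!)
 = (1/2)⟨ṽ_z, (x̃_{N+1} − x̃_N) ṽ_z⟩`. -/
theorem stmt_8 (xt : ℕ → ℝ) (hx0 : xt 0 = 0) (hmono : StrictMono xt)
    (L : ℝ) (hL : ∀ n, xt (n + 1) - xt n ≤ L) (z : ℂ) :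
    variance xt z (QOp xt) = variance xt z (POp xt) ∧
    disp xt z (QOp xt) * disp xt z (POp xt) =
      (1 / 2) * ∑' n : ℕ, (xt (n + 1) - xt n) * ‖z‖ ^ (2 * n) /
        (texp xt (‖z‖ ^ 2) * tfact xt n) ∧
    disp xt z (QOp xt) * disp xt z (POp xt) =
      ((1 / 2 : ℂ) * expVal xt z
        (fun f n => ((xt (n + 1) - xt n : ℝ) : ℂ) * f n)).re := by
  set t : ℝ := ‖z‖ ^ 2 with ht
  have ht0 : 0 ≤ t := by positivity
  have hxpos : ∀ n : ℕ, 0 < xt (n + 1) := fun n => hx0 ▸ hmono n.succ_pos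
  have hxnn : ∀ n : ℕ, 0 ≤ xt n := by
    intro n
    cases n with
    | zero => rw [hx0]
    | succ k => exact (hxpos k).le
  have hfp : ∀ n, 0 < tfact xt n := tfact_pos hx0 hmono
  set g : ℕ → ℝ := fun n => t ^ n / tfact xt n with hgdef
  have hg0 : ∀ n, 0 ≤ g n := fun n => div_nonneg (pow_nonneg ht0 n) (hfp n).le
  have hg00 : g 0 = 1 := by simp [hgdef, tfact]
  have hgsucc : ∀ n, g (n + 1) = g n * (t / xt (n + 1)) := by
    intro n
    simp only [hgdef, tfact_succ, pow_succ]
    rw [div_mul_div_comm]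
  by_cases hex : ∃ m, t < xt m
  case neg =>
    push_neg at hex
    have hge1 : ∀ n, 1 ≤ g n := by
      intro n
      induction n with
      | zero => rw [hg00]
      | succ n ih =>
        rw [hgsucc]
        have h1 : 1 ≤ t / xt (n + 1) := (one_le_div (hxpos n)).mpr (hex (n + 1))
        nlinarith
    have hns : ¬ Summable g := by
      intro hs
      have h0 := hs.tendsto_atTop_zero
      have : (1 : ℝ) ≤ 0 := ge_of_tendsto' h0 hge1
      linarith
    have hN0 : texp xt t = 0 := tsum_eq_zero_of_not_summable hns
    have hc0 : ∀ n, tcoh xt z n = 0 := by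
      intro n
      have hz : Real.sqrt (texp xt (‖z‖ ^ 2)) = 0 := by
        rw [← ht, hN0, Real.sqrt_zero]
      simp [tcoh, hz]
    have hexp0 : ∀ T, expVal xt z T = 0 := by
      intro T
      simp [expVal, hc0]
    have hvar : ∀ T, variance xt z T = 0 := by
      intro T
      simp [variance, hexp0]
    have hdisp : ∀ T, disp xt z T = 0 := by
      intro T
      simp [disp, hvar]
    refine ⟨by rw [hvar, hvar], ?_, ?_⟩
    · rw [hdisp, hdisp, zero_mul, hN0]
      simp
    · rw [hdisp, hdisp, zero_mul, hexp0]
      simp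
  obtain ⟨m, hm⟩ := hex
  have hxm1 : t < xt (m + 1) := hm.trans (hmono (Nat.lt_succ_self m))
  have hxm1p : 0 < xt (m + 1) := ht0.trans_lt hxm1
  set r : ℝ := t / xt (m + 1) with hr
  have hr0 : 0 ≤ r := div_nonneg ht0 hxm1p.le
  have hr1 : r < 1 := (div_lt_one hxm1p).mpr hxm1
  have hgeo : ∀ k, g (m + k) ≤ g m * r ^ k := by
    intro k
    induction k with
    | zero => simp
    | succ k ih =>
      have hx1 : 0 < xt (m + k + 1) := hxpos _
      have hle : xt (m + 1) ≤ xt (m + k + 1) := hmono.monotone (by omega)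
      have h1 : t / xt (m + k + 1) ≤ r := by
        rw [hr]
        gcongr
      have h2 : g (m + (k + 1)) = g (m + k) * (t / xt (m + k + 1)) := hgsucc (m + k)
      rw [h2]
      calc g (m + k) * (t / xt (m + k + 1)) ≤ (g m * r ^ k) * r :=
            mul_le_mul ih h1 (div_nonneg ht0 hx1.le) (mul_nonneg (hg0 m) (pow_nonneg hr0 k))
        _ = g m * r ^ (k + 1) := by rw [pow_succ]; ring
  have hgsum : Summable g := by
    apply (summable_nat_add_iff m).mp
    exact Summable.of_nonneg_of_le (fun k => hg0 _) (fun k => by rw [add_comm k m]; exact hgeo k)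
      ((summable_geometric_of_lt_one hr0 hr1).mul_left (g m))
  have hxL1 : xt 1 ≤ L := by have := hL 0; rw [hx0] at this; linarith
  have hL0 : 0 < L := lt_of_lt_of_le (hxpos 0) hxL1
  have hlin : ∀ n : ℕ, xt n ≤ n * L := by
    intro n
    induction n with
    | zero => rw [hx0]; simp
    | succ n ih =>
      have := hL n
      push_cast
      push_cast at ih
      linarith
  have hgeo_sum : Summable (fun k : ℕ => ((k : ℝ) + 1) * r ^ k) := by
    have h1 := summable_pow_mul_geometric_of_norm_lt_one 1
      (r := r) (by rwa [Real.norm_eq_abs, abs_of_nonneg hr0])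
    have h2 := summable_geometric_of_lt_one hr0 hr1
    exact (h1.add h2).congr (fun k => by push_cast; ring)
  have hsum1 : Summable (fun n => xt (n + 1) * g n) := by
    apply (summable_nat_add_iff m).mp
    have hb : Summable (fun k : ℕ => (L * (g m * ((m : ℝ) + 1))) * (((k : ℝ) + 1) * r ^ k)) :=
      hgeo_sum.mul_left _
    apply Summable.of_nonneg_of_le (fun k => mul_nonneg (hxnn _) (hg0 _)) _ hb
    intro k
    have e1 : xt (k + m + 1) ≤ ((k : ℝ) + m + 1) * L := by
      have := hlin (k + m + 1)
      push_cast at this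
      linarith
    have e2 : g (k + m) ≤ g m * r ^ k := by rw [add_comm k m]; exact hgeo k
    have e3 : ((k : ℝ) + m + 1) ≤ ((m : ℝ) + 1) * ((k : ℝ) + 1) := by
      have hk : (0:ℝ) ≤ (k:ℝ) := Nat.cast_nonneg k
      have hm' : (0:ℝ) ≤ (m:ℝ) := Nat.cast_nonneg m
      nlinarith
    calc xt (k + m + 1) * g (k + m)
        ≤ (((k : ℝ) + m + 1) * L) * (g m * r ^ k) := by
          apply mul_le_mul e1 e2 (hg0 _)
          have h4 : (0:ℝ) ≤ (k : ℝ) + m + 1 := by positivity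
          exact mul_nonneg h4 hL0.le
      _ ≤ ((((m : ℝ) + 1) * ((k : ℝ) + 1)) * L) * (g m * r ^ k) := by
          have hnn : (0:ℝ) ≤ g m * r ^ k := mul_nonneg (hg0 m) (pow_nonneg hr0 k)
          have := mul_le_mul_of_nonneg_right (mul_le_mul_of_nonneg_right e3 hL0.le) hnn
          linarith
      _ = (L * (g m * ((m : ℝ) + 1))) * (((k : ℝ) + 1) * r ^ k) := by ring
  have hNval : texp xt t = ∑' n, g n := by
    simp only [texp, hgdef]
  have hN1 : 1 ≤ texp xt t := by
    rw [hNval, ← hg00]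
    exact Summable.le_tsum hgsum 0 (fun j _ => hg0 j)
  have hNpos : 0 < texp xt t := lt_of_lt_of_le one_pos hN1
  set w : ℕ → ℝ := fun n => (texp xt t)⁻¹ * g n with hwdef
  have hw0 : ∀ n, 0 ≤ w n := fun n => mul_nonneg (inv_nonneg.mpr hNpos.le) (hg0 n)
  have hwsum : Summable w := by rw [hwdef]; exact hgsum.mul_left _
  have hwtsum : ∑' n, w n = 1 := by
    rw [hwdef, tsum_mul_left, ← hNval, inv_mul_cancel₀ hNpos.ne']
  set c : ℕ → ℂ := tcoh xt z with hc
  have ha : ∀ n, aOp xt c n = z * c n := fun n => by rw [hc]; exact a_eigen xt hx0 hmono z n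
  have hnorm : ∀ n, ‖c n‖ ^ 2 = w n := by
    intro n
    rw [hc]
    have h1 : ‖tcoh xt z n‖ = (Real.sqrt (texp xt t))⁻¹ * ‖z‖ ^ n / Real.sqrt (tfact xt n) := by
      simp only [tcoh, ← ht]
      rw [norm_div, norm_mul, norm_pow, Complex.norm_real, Complex.norm_real,
        Real.norm_eq_abs, Real.norm_eq_abs, abs_inv,
        abs_of_nonneg (Real.sqrt_nonneg _), abs_of_nonneg (Real.sqrt_nonneg _)]
    rw [h1, div_pow, mul_pow, inv_pow, Real.sq_sqrt hNpos.le, Real.sq_sqrt (hfp n).le,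
      pow_right_comm, ← ht, hwdef]
    ring
  have hcc : ∀ n, (starRingEnd ℂ) (c n) * c n = ((w n : ℝ) : ℂ) := by
    intro n
    rw [mul_comm, Complex.mul_conj', ← Complex.ofReal_pow, hnorm n]
  have hsw : Summable (fun n => ((w n : ℝ) : ℂ)) := Complex.summable_ofReal.mpr hwsum
  have hS0C : ∑' n, ((w n : ℝ) : ℂ) = 1 := by
    rw [← Complex.ofReal_tsum, hwtsum, Complex.ofReal_one]
  have hdgen : ∀ (f : ℕ → ℂ) (k : ℕ),
      adOp xt f (k + 1) = ((Real.sqrt (xt (k + 1)) : ℝ) : ℂ) * f k := by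
    intro f k
    simp [adOp]
  have hd0gen : ∀ f : ℕ → ℂ, adOp xt f 0 = 0 := by
    intro f
    simp [adOp]
  have hkey : ∀ n, (starRingEnd ℂ) (c (n + 1)) * ((Real.sqrt (xt (n + 1)) : ℝ) : ℂ)
      = (starRingEnd ℂ) z * (starRingEnd ℂ) (c n) := by
    intro n
    calc (starRingEnd ℂ) (c (n + 1)) * ((Real.sqrt (xt (n + 1)) : ℝ) : ℂ)
        = (starRingEnd ℂ) (((Real.sqrt (xt (n + 1)) : ℝ) : ℂ) * c (n + 1)) := by
          rw [map_mul, Complex.conj_ofReal]; ring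
      _ = (starRingEnd ℂ) (aOp xt c n) := rfl
      _ = (starRingEnd ℂ) (z * c n) := by rw [ha n]
      _ = (starRingEnd ℂ) z * (starRingEnd ℂ) (c n) := map_mul _ _ _
  have hsumS0 : Summable (fun n => (starRingEnd ℂ) (c n) * c n) :=
    hsw.congr (fun n => (hcc n).symm)
  have hS0 : ∑' n, (starRingEnd ℂ) (c n) * c n = 1 := by
    rw [tsum_congr hcc, hS0C]
  have hf1 : ∀ n, (starRingEnd ℂ) (c (n + 1)) * adOp xt c (n + 1)
      = (starRingEnd ℂ) z * ((w n : ℝ) : ℂ) := by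
    intro n
    rw [hdgen, ← mul_assoc, hkey, mul_assoc, hcc]
  have hsumS1 : Summable (fun n => (starRingEnd ℂ) (c n) * adOp xt c n) := by
    apply (summable_nat_add_iff 1).mp
    exact (hsw.mul_left ((starRingEnd ℂ) z)).congr (fun n => (hf1 n).symm)
  have hS1 : ∑' n, (starRingEnd ℂ) (c n) * adOp xt c n = (starRingEnd ℂ) z := by
    rw [Summable.tsum_eq_zero_add hsumS1, hd0gen, mul_zero, zero_add, tsum_congr hf1, tsum_mul_left,
      hS0C, mul_one]
  have hf2 : ∀ n, (starRingEnd ℂ) (c (n + 2)) * adOp xt (adOp xt c) (n + 2)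
      = ((starRingEnd ℂ) z) ^ 2 * ((w n : ℝ) : ℂ) := by
    intro n
    rw [hdgen (adOp xt c) (n + 1), hdgen c n]
    calc (starRingEnd ℂ) (c (n + 2)) * (((Real.sqrt (xt (n + 2)) : ℝ) : ℂ) *
          (((Real.sqrt (xt (n + 1)) : ℝ) : ℂ) * c n))
        = ((starRingEnd ℂ) (c (n + 2)) * ((Real.sqrt (xt (n + 2)) : ℝ) : ℂ)) *
            ((Real.sqrt (xt (n + 1)) : ℝ) : ℂ) * c n := by ring
      _ = ((starRingEnd ℂ) z * (starRingEnd ℂ) (c (n + 1))) *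
            ((Real.sqrt (xt (n + 1)) : ℝ) : ℂ) * c n := by rw [hkey (n + 1)]
      _ = (starRingEnd ℂ) z * (((starRingEnd ℂ) (c (n + 1)) *
            ((Real.sqrt (xt (n + 1)) : ℝ) : ℂ)) * c n) := by ring
      _ = (starRingEnd ℂ) z * (((starRingEnd ℂ) z * (starRingEnd ℂ) (c n)) * c n) := by
            rw [hkey n]
      _ = ((starRingEnd ℂ) z) ^ 2 * ((starRingEnd ℂ) (c n) * c n) := by ring
      _ = ((starRingEnd ℂ) z) ^ 2 * ((w n : ℝ) : ℂ) := by rw [hcc]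
  have hsumS3 : Summable (fun n => (starRingEnd ℂ) (c n) * adOp xt (adOp xt c) n) := by
    apply (summable_nat_add_iff 2).mp
    exact (hsw.mul_left (((starRingEnd ℂ) z) ^ 2)).congr (fun n => (hf2 n).symm)
  have hS3 : ∑' n, (starRingEnd ℂ) (c n) * adOp xt (adOp xt c) n = ((starRingEnd ℂ) z) ^ 2 := by
    rw [Summable.tsum_eq_zero_add hsumS3, Summable.tsum_eq_zero_add ((summable_nat_add_iff 1).mpr hsumS3)]
    rw [hd0gen, mul_zero, zero_add, hdgen (adOp xt c) 0, hd0gen, mul_zero, mul_zero, zero_add]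
    rw [tsum_congr (fun n => hf2 n), tsum_mul_left, hS0C, mul_one]
  have hCps : Summable (fun n => xt (n + 1) * w n) :=
    (hsum1.mul_left (texp xt t)⁻¹).congr (fun n => by simp only [hwdef]; ring)
  set Cp : ℝ := ∑' n, xt (n + 1) * w n with hCp
  have hsumS2C : Summable (fun n => ((xt (n + 1) * w n : ℝ) : ℂ)) :=
    Complex.summable_ofReal.mpr hCps
  have hS2C : ∑' n, ((xt (n + 1) * w n : ℝ) : ℂ) = ((Cp : ℝ) : ℂ) := by
    rw [← Complex.ofReal_tsum, hCp]
  have hsxw : Summable (fun n => xt n * w n) := by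
    apply Summable.of_nonneg_of_le (fun n => mul_nonneg (hxnn n) (hw0 n)) _ hCps
    intro n
    exact mul_le_mul_of_nonneg_right (hmono n.lt_succ_self).le (hw0 n)
  have hxw_succ : ∀ n, xt (n + 1) * w (n + 1) = t * w n := by
    intro n
    have hxne : xt (n + 1) ≠ 0 := (hxpos n).ne'
    simp only [hwdef, hgsucc]
    field_simp
  have htsum_xw : ∑' n, xt n * w n = t := by
    rw [Summable.tsum_eq_zero_add hsxw, hx0, zero_mul, zero_add, tsum_congr hxw_succ, tsum_mul_left,
      hwtsum, mul_one]
  have hQc : ∀ n, QOp xt c n = (z * c n + adOp xt c n) / ((Real.sqrt 2 : ℝ) : ℂ) := by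
    intro n
    show (aOp xt c n + adOp xt c n) / _ = _
    rw [ha n]
  have hPc : ∀ n, POp xt c n = (z * c n - adOp xt c n) / (Complex.I * ((Real.sqrt 2 : ℝ) : ℂ)) := by
    intro n
    show (aOp xt c n - adOp xt c n) / _ = _
    rw [ha n]
  have haQ : ∀ n, aOp xt (QOp xt c) n
      = (z ^ 2 * c n + ((xt (n + 1) : ℝ) : ℂ) * c n) / ((Real.sqrt 2 : ℝ) : ℂ) := by
    intro n
    show ((Real.sqrt (xt (n + 1)) : ℝ) : ℂ) * QOp xt c (n + 1) = _
    rw [hQc (n + 1), hdgen c n]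
    have h2 : ((Real.sqrt (xt (n + 1)) : ℝ) : ℂ) * c (n + 1) = z * c n := by
      have h : ((Real.sqrt (xt (n + 1)) : ℝ) : ℂ) * c (n + 1) = aOp xt c n := rfl
      rw [h, ha n]
    have h3 : ((Real.sqrt (xt (n + 1)) : ℝ) : ℂ) * ((Real.sqrt (xt (n + 1)) : ℝ) : ℂ)
        = ((xt (n + 1) : ℝ) : ℂ) := by
      rw [← Complex.ofReal_mul, Real.mul_self_sqrt (hxpos n).le]
    linear_combination (z / ((Real.sqrt 2 : ℝ) : ℂ)) * h2 + (c n / ((Real.sqrt 2 : ℝ) : ℂ)) * h3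
  have haP : ∀ n, aOp xt (POp xt c) n
      = (z ^ 2 * c n - ((xt (n + 1) : ℝ) : ℂ) * c n) / (Complex.I * ((Real.sqrt 2 : ℝ) : ℂ)) := by
    intro n
    show ((Real.sqrt (xt (n + 1)) : ℝ) : ℂ) * POp xt c (n + 1) = _
    rw [hPc (n + 1), hdgen c n]
    have h2 : ((Real.sqrt (xt (n + 1)) : ℝ) : ℂ) * c (n + 1) = z * c n := by
      have h : ((Real.sqrt (xt (n + 1)) : ℝ) : ℂ) * c (n + 1) = aOp xt c n := rfl
      rw [h, ha n]
    have h3 : ((Real.sqrt (xt (n + 1)) : ℝ) : ℂ) * ((Real.sqrt (xt (n + 1)) : ℝ) : ℂ)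
        = ((xt (n + 1) : ℝ) : ℂ) := by
      rw [← Complex.ofReal_mul, Real.mul_self_sqrt (hxpos n).le]
    linear_combination (z / (Complex.I * ((Real.sqrt 2 : ℝ) : ℂ))) * h2
      - (c n / (Complex.I * ((Real.sqrt 2 : ℝ) : ℂ))) * h3
  have hadQ : ∀ n, adOp xt (QOp xt c) n
      = (z * adOp xt c n + adOp xt (adOp xt c) n) / ((Real.sqrt 2 : ℝ) : ℂ) := by
    intro n
    cases n with
    | zero => simp [adOp]
    | succ k =>
      rw [hdgen (QOp xt c) k, hQc k, hdgen c k, hdgen (adOp xt c) k]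
      ring
  have hadP : ∀ n, adOp xt (POp xt c) n
      = (z * adOp xt c n - adOp xt (adOp xt c) n) / (Complex.I * ((Real.sqrt 2 : ℝ) : ℂ)) := by
    intro n
    cases n with
    | zero => simp [adOp]
    | succ k =>
      rw [hdgen (POp xt c) k, hPc k, hdgen c k, hdgen (adOp xt c) k]
      ring
  have hcombo : ∀ k a b d e : ℂ,
      (∑' n, k * (a * ((starRingEnd ℂ) (c n) * c n) + b * ((xt (n + 1) * w n : ℝ) : ℂ)
        + d * ((starRingEnd ℂ) (c n) * adOp xt c n)
        + e * ((starRingEnd ℂ) (c n) * adOp xt (adOp xt c) n)))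
      = k * (a * 1 + b * ((Cp : ℝ) : ℂ) + d * (starRingEnd ℂ) z
        + e * ((starRingEnd ℂ) z) ^ 2) := by
    intro k a b d e
    rw [tsum_mul_left]
    congr 1
    rw [Summable.tsum_add (((hsumS0.mul_left a).add (hsumS2C.mul_left b)).add (hsumS1.mul_left d))
        (hsumS3.mul_left e),
      Summable.tsum_add ((hsumS0.mul_left a).add (hsumS2C.mul_left b)) (hsumS1.mul_left d),
      Summable.tsum_add (hsumS0.mul_left a) (hsumS2C.mul_left b),
      tsum_mul_left, tsum_mul_left, tsum_mul_left, tsum_mul_left, hS0, hS2C, hS1, hS3]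
  have hx1w : ∀ n, ((xt (n + 1) * w n : ℝ) : ℂ)
      = ((xt (n + 1) : ℝ) : ℂ) * ((starRingEnd ℂ) (c n) * c n) := by
    intro n
    rw [Complex.ofReal_mul, hcc]
  have htermQ : ∀ n, (starRingEnd ℂ) (c n) * QOp xt c n
      = ((Real.sqrt 2 : ℝ) : ℂ)⁻¹ * (z * ((starRingEnd ℂ) (c n) * c n)
        + 0 * ((xt (n + 1) * w n : ℝ) : ℂ) + 1 * ((starRingEnd ℂ) (c n) * adOp xt c n)
        + 0 * ((starRingEnd ℂ) (c n) * adOp xt (adOp xt c) n)) := by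
    intro n
    rw [hQc n]
    ring
  have htermP : ∀ n, (starRingEnd ℂ) (c n) * POp xt c n
      = (Complex.I * ((Real.sqrt 2 : ℝ) : ℂ))⁻¹ * (z * ((starRingEnd ℂ) (c n) * c n)
        + 0 * ((xt (n + 1) * w n : ℝ) : ℂ) + (-1) * ((starRingEnd ℂ) (c n) * adOp xt c n)
        + 0 * ((starRingEnd ℂ) (c n) * adOp xt (adOp xt c) n)) := by
    intro n
    rw [hPc n]
    ring
  have htermQQ : ∀ n, (starRingEnd ℂ) (c n) * QOp xt (QOp xt c) n
      = (((Real.sqrt 2 : ℝ) : ℂ) * ((Real.sqrt 2 : ℝ) : ℂ))⁻¹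
        * (z ^ 2 * ((starRingEnd ℂ) (c n) * c n) + 1 * ((xt (n + 1) * w n : ℝ) : ℂ)
          + z * ((starRingEnd ℂ) (c n) * adOp xt c n)
          + 1 * ((starRingEnd ℂ) (c n) * adOp xt (adOp xt c) n)) := by
    intro n
    show (starRingEnd ℂ) (c n) * ((aOp xt (QOp xt c) n + adOp xt (QOp xt c) n) / _) = _
    rw [haQ n, hadQ n, hx1w n]
    ring
  have htermPP : ∀ n, (starRingEnd ℂ) (c n) * POp xt (POp xt c) n
      = ((Complex.I * ((Real.sqrt 2 : ℝ) : ℂ)) * (Complex.I * ((Real.sqrt 2 : ℝ) : ℂ)))⁻¹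
        * (z ^ 2 * ((starRingEnd ℂ) (c n) * c n) + (-1) * ((xt (n + 1) * w n : ℝ) : ℂ)
          + (-z) * ((starRingEnd ℂ) (c n) * adOp xt c n)
          + 1 * ((starRingEnd ℂ) (c n) * adOp xt (adOp xt c) n)) := by
    intro n
    show (starRingEnd ℂ) (c n) * ((aOp xt (POp xt c) n - adOp xt (POp xt c) n) / _) = _
    rw [haP n, hadP n, hx1w n]
    ring
  have hEQ : expVal xt z (QOp xt)
      = ((Real.sqrt 2 : ℝ) : ℂ)⁻¹ * (z * 1 + 0 * ((Cp : ℝ) : ℂ) + 1 * (starRingEnd ℂ) z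
        + 0 * ((starRingEnd ℂ) z) ^ 2) := by
    unfold expVal
    simp only [← hc]
    rw [tsum_congr htermQ]
    exact hcombo _ _ _ _ _
  have hEP : expVal xt z (POp xt)
      = (Complex.I * ((Real.sqrt 2 : ℝ) : ℂ))⁻¹ * (z * 1 + 0 * ((Cp : ℝ) : ℂ)
        + (-1) * (starRingEnd ℂ) z + 0 * ((starRingEnd ℂ) z) ^ 2) := by
    unfold expVal
    simp only [← hc]
    rw [tsum_congr htermP]
    exact hcombo _ _ _ _ _
  have hEQQ : expVal xt z (fun f => QOp xt (QOp xt f))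
      = (((Real.sqrt 2 : ℝ) : ℂ) * ((Real.sqrt 2 : ℝ) : ℂ))⁻¹ * (z ^ 2 * 1
        + 1 * ((Cp : ℝ) : ℂ) + z * (starRingEnd ℂ) z + 1 * ((starRingEnd ℂ) z) ^ 2) := by
    unfold expVal
    simp only [← hc]
    rw [tsum_congr htermQQ]
    exact hcombo _ _ _ _ _
  have hEPP : expVal xt z (fun f => POp xt (POp xt f))
      = ((Complex.I * ((Real.sqrt 2 : ℝ) : ℂ)) * (Complex.I * ((Real.sqrt 2 : ℝ) : ℂ)))⁻¹
        * (z ^ 2 * 1 + (-1) * ((Cp : ℝ) : ℂ) + (-z) * (starRingEnd ℂ) z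
          + 1 * ((starRingEnd ℂ) z) ^ 2) := by
    unfold expVal
    simp only [← hc]
    rw [tsum_congr htermPP]
    exact hcombo _ _ _ _ _
  have h22C : ((Real.sqrt 2 : ℝ) : ℂ) * ((Real.sqrt 2 : ℝ) : ℂ) = 2 := by
    rw [← Complex.ofReal_mul, Real.mul_self_sqrt (by norm_num : (0:ℝ) ≤ 2)]
    norm_num
  have hI2 : (Complex.I * ((Real.sqrt 2 : ℝ) : ℂ)) * (Complex.I * ((Real.sqrt 2 : ℝ) : ℂ))
      = -2 := by
    rw [mul_mul_mul_comm, Complex.I_mul_I, h22C]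
    ring
  have hzc : z * (starRingEnd ℂ) z = ((t : ℝ) : ℂ) := by
    rw [Complex.mul_conj', ht]
    push_cast
    ring
  set V : ℝ := (Cp - t) / 2 with hVd
  have hvQ : variance xt z (QOp xt) = ((V : ℝ) : ℂ) := by
    rw [variance, hEQQ, hEQ, h22C, mul_pow]
    have hsq : (((Real.sqrt 2 : ℝ) : ℂ)⁻¹) ^ 2 = (2 : ℂ)⁻¹ := by
      rw [inv_pow, sq, h22C]
    rw [hsq, hVd]
    push_cast
    linear_combination (-1/2 : ℂ) * hzc
  have hvP : variance xt z (POp xt) = ((V : ℝ) : ℂ) := by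
    rw [variance, hEPP, hEP, hI2, mul_pow]
    have hsq : ((Complex.I * ((Real.sqrt 2 : ℝ) : ℂ))⁻¹) ^ 2 = (-2 : ℂ)⁻¹ := by
      rw [inv_pow, sq, hI2]
    rw [hsq, hVd]
    push_cast
    linear_combination (-1/2 : ℂ) * hzc
  have hCt : Cp - t = ∑' n, (xt (n + 1) - xt n) * w n := by
    have h : ∀ n, (xt (n + 1) - xt n) * w n = xt (n + 1) * w n - xt n * w n := fun n => by ring
    rw [tsum_congr h, Summable.tsum_sub hCps hsxw, ← hCp, htsum_xw]
  have hgap : 0 ≤ ∑' n, (xt (n + 1) - xt n) * w n :=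
    tsum_nonneg fun n => mul_nonneg (sub_nonneg.mpr (hmono n.lt_succ_self).le) (hw0 n)
  have hV0 : 0 ≤ V := by
    rw [hVd, hCt]
    linarith
  have hdQ : disp xt z (QOp xt) = Real.sqrt V := by
    rw [disp, hvQ, Complex.ofReal_re]
  have hdP : disp xt z (POp xt) = Real.sqrt V := by
    rw [disp, hvP, Complex.ofReal_re]
  have hprod : disp xt z (QOp xt) * disp xt z (POp xt) = V := by
    rw [hdQ, hdP, Real.mul_self_sqrt hV0]
  have hterm2 : ∀ n, (xt (n + 1) - xt n) * ‖z‖ ^ (2 * n) / (texp xt t * tfact xt n)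
      = (xt (n + 1) - xt n) * w n := by
    intro n
    have hNne : texp xt t ≠ 0 := hNpos.ne'
    have hfne : tfact xt n ≠ 0 := (hfp n).ne'
    rw [pow_mul, ← ht]
    simp only [hwdef]
    have h1 : (texp xt t)⁻¹ * (t ^ n / tfact xt n) = t ^ n / (texp xt t * tfact xt n) := by
      rw [inv_mul_eq_div, div_div, mul_comm]
    rw [h1, mul_div_assoc]
  refine ⟨by rw [hvQ, hvP], ?_, ?_⟩
  · rw [hprod, tsum_congr hterm2, ← hCt, hVd]
    ring
  · rw [hprod]
    have hEdiag : expVal xt z (fun f n => ((xt (n + 1) - xt n : ℝ) : ℂ) * f n)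
        = ((Cp - t : ℝ) : ℂ) := by
      unfold expVal
      simp only [← hc]
      have hterm3 : ∀ n, (starRingEnd ℂ) (c n) * (((xt (n + 1) - xt n : ℝ) : ℂ) * c n)
          = (((xt (n + 1) - xt n) * w n : ℝ) : ℂ) := by
        intro n
        rw [mul_left_comm, hcc n, ← Complex.ofReal_mul]
      rw [tsum_congr hterm3, ← Complex.ofReal_tsum, ← hCt]
    rw [hEdiag]
    rw [show (1 / 2 : ℂ) * ((Cp - t : ℝ) : ℂ) = (((Cp - t) / 2 : ℝ) : ℂ) by push_cast; ring,
      Complex.ofReal_re, hVd]
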